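/- Let T be a k-uniform hypertree (a connected acyclic k-uniform hypergraph) and u a vertex of T. Then the path tree T(T,u) of T with respect to u is isomorphic to T. Conversely, if H is connected and T(H,u) is isomorphic to H, then H is a k-uniform hypertree. -/

import Mathlib

open scoped Classical

structure KHypergraph (α : Type*) [DecidableEq α] where
  verts : Finset α
  edges : Finset (Finset α)
  edge_sub : ∀ e ∈ edges, e ⊆ verts

namespace KHypergraph

variable {α : Type*} [DecidableEq α] {β : Type*} [DecidableEq β]

/-- `H` is `k`-uniform: every edge has exactly `k` vertices. -/
def IsUniform (H : KHypergraph α) (k : ℕ) : Prop := ∀ e ∈ H.edges, e.card = k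

/-- The degree of a vertex: the number of edges containing it. -/
def degree (H : KHypergraph α) (v : α) : ℕ := (H.edges.filter (fun e => v ∈ e)).card

/-- `Δ` is the maximum degree of `H`. -/
def maxDegree (H : KHypergraph α) (Δ : ℕ) : Prop :=
  (∀ v, H.degree v ≤ Δ) ∧ ∃ v ∈ H.verts, H.degree v = Δ

/-- Two vertices are adjacent if some edge contains both. -/
def Adj (H : KHypergraph α) (a b : α) : Prop := ∃ e ∈ H.edges, a ∈ e ∧ b ∈ e

/-- `H` is connected: nonempty and any two vertices joined by a walk. -/
def Connected (H : KHypergraph α) : Prop :=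
  H.verts.Nonempty ∧ ∀ a ∈ H.verts, ∀ b ∈ H.verts, Relation.ReflTransGen H.Adj a b

/-- A matching: a set of pairwise disjoint edges of `H`. -/
def IsMatching (H : KHypergraph α) (M : Finset (Finset α)) : Prop :=
  M ⊆ H.edges ∧ ∀ e ∈ M, ∀ f ∈ M, e ≠ f → Disjoint e f

/-- `p(H, r)`: the number of matchings of size `r`. -/
noncomputable def matchCount (H : KHypergraph α) (r : ℕ) : ℕ :=
  (H.edges.powerset.filter (fun M => M.card = r ∧ H.IsMatching M)).card

/-- The matching polynomial `μ(H,x) = Σ_r (-1)^r p(H,r) x^{|V| - k r}`. -/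
noncomputable def matchingPoly (H : KHypergraph α) (k : ℕ) : Polynomial ℝ :=
  ∑ r ∈ Finset.range (H.edges.card + 1),
    Polynomial.C ((-1 : ℝ) ^ r * (H.matchCount r : ℝ)) * Polynomial.X ^ (H.verts.card - k * r)

/-- Deleting a set of vertices: induced sub-hypergraph on `verts \ W`. -/
def delete (H : KHypergraph α) (W : Finset α) : KHypergraph α where
  verts := H.verts \ W
  edges := H.edges.filter (fun e => Disjoint e W)
  edge_sub := by
    intro e he
    simp only [Finset.mem_filter] at he
    exact Finset.subset_sdiff.mpr ⟨H.edge_sub e he.1, he.2⟩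

/-- The set of moduli of the complex zeros of a real polynomial. -/
def rootModuli (p : Polynomial ℝ) : Set ℝ :=
  {m | ∃ z : ℂ, (Polynomial.aeval z) p = 0 ∧ ‖z‖ = m}

/-- `λ(H)`: the maximum modulus of the complex zeros of the matching polynomial. -/
noncomputable def lam (H : KHypergraph α) (k : ℕ) : ℝ :=
  sSup (rootModuli (H.matchingPoly k))


/-! ### Paths, cycles and path trees -/

variable {α : Type*} [DecidableEq α]

/-- The sequence of vertices `v₀ = u, v₁, …` visited by a walk encoded as a list of
(edge, next-vertex) steps. -/
def vertAt (u : α) (p : List (Finset α × α)) (t : ℕ) : α :=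
  (u :: p.map Prod.snd).getD t u

/-- The terminal vertex of a walk starting at `u`. -/
def lastVert (u : α) (p : List (Finset α × α)) : α :=
  (p.map Prod.snd).getLastD u

/-- `p` is a nonbacktracking path in `H` starting at `u`: the vertices and the edges
are distinct, consecutive conditions `v_{t}, v_{t+1} ∈ e_{t+1}` hold, and edge
`e_{t+1}` contains none of the vertices `v₀, …, v_{t-1}`. -/
def IsNBPath (H : KHypergraph α) (u : α) (p : List (Finset α × α)) : Prop :=
  u ∈ H.verts ∧ (p.map Prod.fst).Nodup ∧ (u :: p.map Prod.snd).Nodup ∧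
  ∀ t < p.length,
    (p.getD t (∅, u)).1 ∈ H.edges ∧
    vertAt u p t ∈ (p.getD t (∅, u)).1 ∧
    (p.getD t (∅, u)).2 ∈ (p.getD t (∅, u)).1 ∧
    ∀ i < t, vertAt u p i ∉ (p.getD t (∅, u)).1

/-- `H` contains a cycle: a closed walk of positive length with distinct edges,
distinct vertices except that the first and last coincide, and consecutive vertices
distinct. -/
def HasCycle (H : KHypergraph α) : Prop :=
  ∃ (u : α) (p : List (Finset α × α)), u ∈ H.verts ∧ p ≠ [] ∧
    (p.map Prod.fst).Nodup ∧ (p.map Prod.snd).Nodup ∧ lastVert u p = u ∧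
    ∀ t < p.length,
      (p.getD t (∅, u)).1 ∈ H.edges ∧
      vertAt u p t ∈ (p.getD t (∅, u)).1 ∧
      (p.getD t (∅, u)).2 ∈ (p.getD t (∅, u)).1 ∧
      vertAt u p t ≠ (p.getD t (∅, u)).2

/-- A `k`-uniform hypertree: connected and acyclic. -/
def IsHypertree (H : KHypergraph α) (k : ℕ) : Prop :=
  H.IsUniform k ∧ H.Connected ∧ ¬ H.HasCycle

/-- The vertex set of the path tree: all nonbacktracking paths in `H` starting at `u`. -/
noncomputable def pathTreeVerts (H : KHypergraph α) (u : α) [Fintype α] :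
    Finset (List (Finset α × α)) :=
  Set.Finite.toFinset (s := {p | H.IsNBPath u p}) (by
    apply Set.Finite.subset
      (List.finite_length_le (Finset α × α) (Fintype.card (Finset α)))
    intro p hp
    have hnd : (p.map Prod.fst).Nodup := hp.2.1
    have := hnd.length_le_card
    simpa using this)

/-- The path tree `T(H,u)` of `H` with respect to `u`: vertices are the
nonbacktracking paths starting at `u`; a path `p₁` together with its continuations
through a common terminal edge `e` (one for each vertex of `e` other than the terminal
vertex of `p₁`) forms an edge. -/
noncomputable def pathTree (H : KHypergraph α) (u : α) [Fintype α] :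
    KHypergraph (List (Finset α × α)) where
  verts := pathTreeVerts H u
  edges := ((pathTreeVerts H u ×ˢ H.edges).filter
      (fun q => (q.2.erase (lastVert u q.1)).Nonempty ∧
        ∀ v ∈ q.2.erase (lastVert u q.1), H.IsNBPath u (q.1 ++ [(q.2, v)]))).image
      (fun q => insert q.1 ((q.2.erase (lastVert u q.1)).image
        (fun v => q.1 ++ [(q.2, v)])))
  edge_sub := by
    intro E hE
    simp only [Finset.mem_image, Finset.mem_filter, Finset.mem_product] at hE
    obtain ⟨q, ⟨⟨hq1, _⟩, _, hall⟩, rfl⟩ := hE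
    intro p hp
    simp only [Finset.mem_insert, Finset.mem_image] at hp
    rcases hp with rfl | ⟨v, hv, rfl⟩
    · exact hq1
    · unfold pathTreeVerts
      rw [Set.Finite.mem_toFinset]
      exact hall v hv

/-- Isomorphism of hypergraphs: a bijection between the vertex sets carrying edges
onto edges. -/
def Isom {β : Type*} [DecidableEq β] (H₁ : KHypergraph α) (H₂ : KHypergraph β) : Prop :=
  ∃ f : α → β, Set.BijOn f ↑H₁.verts ↑H₂.verts ∧
    (∀ e ∈ H₁.edges, e.image f ∈ H₂.edges) ∧
    (∀ E ∈ H₂.edges, ∃ e ∈ H₁.edges, e.image f = E)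

end KHypergraph
set_option linter.unusedSectionVars false
set_option linter.dupNamespace false

namespace KHypergraph

variable {α : Type*} [DecidableEq α]

lemma vertAt_eq_getElem {u : α} {p : List (Finset α × α)} {t : ℕ} (ht : t ≤ p.length) :
    vertAt u p t = (u :: p.map Prod.snd)[t]'(by simp; omega) :=
  List.getD_eq_getElem _ _ (by simp; omega)

lemma vertAt_zero (u : α) (p : List (Finset α × α)) : vertAt u p 0 = u := rfl

lemma getD_eq_getElem' {p : List (Finset α × α)} {t : ℕ} (d : Finset α × α) (ht : t < p.length) :
    p.getD t d = p[t] := List.getD_eq_getElem _ _ ht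

lemma vertAt_succ {u : α} {p : List (Finset α × α)} {t : ℕ} (ht : t < p.length) :
    vertAt u p (t + 1) = (p.getD t (∅, u)).2 := by
  rw [vertAt_eq_getElem (by omega), getD_eq_getElem' _ ht]
  simp

lemma vertAt_append_of_le {u : α} {p q : List (Finset α × α)} {t : ℕ} (ht : t ≤ p.length) :
    vertAt u (p ++ q) t = vertAt u p t := by
  unfold vertAt
  simp only [List.map_append]
  rw [show (u :: (p.map Prod.snd ++ q.map Prod.snd)) = (u :: p.map Prod.snd) ++ q.map Prod.snd from rfl]
  exact List.getD_append _ _ _ _ (by simp; omega)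

lemma vertAt_take {u : α} {p : List (Finset α × α)} {i t : ℕ} (ht : t ≤ i) (ht' : t ≤ p.length) :
    vertAt u (p.take i) t = vertAt u p t := by
  conv_rhs => rw [← List.take_append_drop i p]
  rw [vertAt_append_of_le (by simp; omega)]

lemma lastVert_eq_vertAt (u : α) (p : List (Finset α × α)) :
    lastVert u p = vertAt u p p.length := by
  induction p using List.reverseRecOn with
  | nil => rfl
  | append_singleton q x ih =>
    unfold lastVert vertAt
    simp only [List.map_append, List.map_cons, List.map_nil]
    rw [List.getLastD_concat]
    rw [show (u :: (q.map Prod.snd ++ [x.2])) = (u :: q.map Prod.snd) ++ [x.2] from rfl]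
    rw [List.getD_eq_getElem _ _ (by simp), List.getElem_append_right (by simp)]
    simp

lemma lastVert_concat (u : α) (p : List (Finset α × α)) (x : Finset α × α) :
    lastVert u (p ++ [x]) = x.2 := by
  unfold lastVert
  simp only [List.map_append, List.map_cons, List.map_nil]
  rw [List.getLastD_concat]

lemma lastVert_take {u : α} {p : List (Finset α × α)} {i : ℕ} (hi : i ≤ p.length) :
    lastVert u (p.take i) = vertAt u p i := by
  rw [lastVert_eq_vertAt, List.length_take, min_eq_left hi, vertAt_take le_rfl hi]

lemma vertAt_injOn {u : α} {p : List (Finset α × α)} (hnd : (u :: p.map Prod.snd).Nodup)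
    {s t : ℕ} (hs : s ≤ p.length) (ht : t ≤ p.length) (h : vertAt u p s = vertAt u p t) :
    s = t := by
  rw [vertAt_eq_getElem hs, vertAt_eq_getElem ht] at h
  exact (List.Nodup.getElem_inj_iff hnd).mp h

lemma mem_vlist_iff {u x : α} {p : List (Finset α × α)} :
    x ∈ (u :: p.map Prod.snd) ↔ ∃ i ≤ p.length, vertAt u p i = x := by
  rw [List.mem_iff_getElem]
  constructor
  · rintro ⟨i, hi, rfl⟩
    have hi' : i ≤ p.length := by simp at hi; omega
    exact ⟨i, hi', vertAt_eq_getElem hi'⟩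
  · rintro ⟨i, hi, rfl⟩
    exact ⟨i, by simp; omega, (vertAt_eq_getElem hi).symm⟩

lemma vertAt_mem_vlist {u : α} {p : List (Finset α × α)} {i : ℕ} (hi : i ≤ p.length) :
    vertAt u p i ∈ (u :: p.map Prod.snd) :=
  mem_vlist_iff.mpr ⟨i, hi, rfl⟩

lemma fst_getD_eq {p : List (Finset α × α)} {t : ℕ} (d : Finset α × α) (ht : t < p.length) :
    (p.getD t d).1 = (p.map Prod.fst)[t]'(by simp; omega) := by
  rw [getD_eq_getElem' _ ht]; simp

lemma fst_injOn {p : List (Finset α × α)} (hnd : (p.map Prod.fst).Nodup)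
    {s t : ℕ} (hs : s < p.length) (ht : t < p.length) (d : Finset α × α)
    (h : (p.getD s d).1 = (p.getD t d).1) : s = t := by
  rw [fst_getD_eq d hs, fst_getD_eq d ht] at h
  exact (List.Nodup.getElem_inj_iff hnd).mp h

end KHypergraph
namespace KHypergraph

variable {α : Type*} [DecidableEq α] {H : KHypergraph α} {u : α}

lemma getD_take {p : List (Finset α × α)} {i t : ℕ} (d : Finset α × α) (ht : t < i)
    (ht' : t < p.length) : (p.take i).getD t d = p.getD t d := by
  rw [getD_eq_getElem' d (by simp; omega), getD_eq_getElem' d ht']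
  exact List.getElem_take

lemma getD_append_lt {p q : List (Finset α × α)} {t : ℕ} (d : Finset α × α)
    (ht : t < p.length) : (p ++ q).getD t d = p.getD t d :=
  List.getD_append _ _ _ _ ht

lemma getD_concat_len {p : List (Finset α × α)} (x d : Finset α × α) :
    (p ++ [x]).getD p.length d = x := by
  rw [getD_eq_getElem' d (by simp)]
  rw [List.getElem_append_right (by simp)]
  simp

lemma isNBPath_nil (hu : u ∈ H.verts) : H.IsNBPath u [] :=
  ⟨hu, List.nodup_nil, by simp, fun t ht => by simp at ht⟩

lemma IsNBPath.take {p : List (Finset α × α)} (hp : H.IsNBPath u p) (i : ℕ) :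
    H.IsNBPath u (p.take i) := by
  obtain ⟨hu, hf, hv, hc⟩ := hp
  refine ⟨hu, ?_, ?_, ?_⟩
  · rw [List.map_take]
    exact hf.sublist (List.take_sublist _ _)
  · rw [List.map_take, show u :: (p.map Prod.snd).take i = (u :: p.map Prod.snd).take (i+1) from rfl]
    exact hv.sublist (List.take_sublist _ _)
  · intro t ht
    simp only [List.length_take, lt_min_iff] at ht
    obtain ⟨h1, h2, h3, h4⟩ := hc t ht.2
    rw [getD_take _ ht.1 ht.2, vertAt_take (le_of_lt ht.1) (le_of_lt ht.2)]
    refine ⟨h1, h2, h3, fun j hj => ?_⟩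
    rw [vertAt_take (by omega) (by omega)]
    exact h4 j hj

lemma isNBPath_concat {p : List (Finset α × α)} {e : Finset α} {v : α}
    (hp : H.IsNBPath u p) (he : e ∈ H.edges) (hlast : lastVert u p ∈ e) (hv : v ∈ e)
    (hef : e ∉ p.map Prod.fst) (hvv : v ∉ u :: p.map Prod.snd)
    (hmiss : ∀ i < p.length, vertAt u p i ∉ e) :
    H.IsNBPath u (p ++ [(e, v)]) := by
  obtain ⟨hu, hf, hvn, hc⟩ := hp
  refine ⟨hu, ?_, ?_, ?_⟩
  · simp only [List.map_append, List.map_cons, List.map_nil]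
    rw [List.nodup_append]
    exact ⟨hf, List.nodup_singleton _, fun a ha b hb => by simp at hb; subst hb; exact fun h => hef (h ▸ ha)⟩
  · simp only [List.map_append, List.map_cons, List.map_nil]
    rw [show u :: (p.map Prod.snd ++ [v]) = (u :: p.map Prod.snd) ++ [v] from rfl,
      List.nodup_append]
    exact ⟨hvn, List.nodup_singleton _, fun a ha b hb => by simp at hb; subst hb; exact fun h => hvv (h ▸ ha)⟩
  · intro t ht
    simp only [List.length_append, List.length_cons, List.length_nil] at ht
    rcases Nat.lt_or_ge t p.length with h | h
    · obtain ⟨h1, h2, h3, h4⟩ := hc t h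
      rw [getD_append_lt _ h, vertAt_append_of_le (le_of_lt h)]
      refine ⟨h1, h2, h3, fun j hj => ?_⟩
      rw [vertAt_append_of_le (by omega)]
      exact h4 j hj
    · have h' : t = p.length := by omega
      subst h'
      rw [getD_concat_len, vertAt_append_of_le le_rfl, ← lastVert_eq_vertAt]
      refine ⟨he, hlast, hv, fun j hj => ?_⟩
      rw [vertAt_append_of_le (by omega)]
      exact hmiss j hj

lemma IsNBPath.vertAt_mem_verts {p : List (Finset α × α)} (hp : H.IsNBPath u p)
    {i : ℕ} (hi : i ≤ p.length) : vertAt u p i ∈ H.verts := by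
  rcases i with _ | t
  · exact hp.1
  · have ht : t < p.length := by omega
    obtain ⟨h1, _, h3, _⟩ := hp.2.2.2 t ht
    rw [vertAt_succ ht]
    exact H.edge_sub _ h1 h3

lemma IsNBPath.lastVert_mem_verts {p : List (Finset α × α)} (hp : H.IsNBPath u p) :
    lastVert u p ∈ H.verts := by
  rw [lastVert_eq_vertAt]
  exact hp.vertAt_mem_verts le_rfl

lemma mem_pathTreeVerts {p : List (Finset α × α)} [Fintype α] :
    p ∈ pathTreeVerts H u ↔ H.IsNBPath u p := by
  unfold pathTreeVerts
  rw [Set.Finite.mem_toFinset]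
  rfl

end KHypergraph
namespace KHypergraph

variable {α : Type*} [DecidableEq α] {H : KHypergraph α} {u : α}

lemma exists_nbpath_step {p : List (Finset α × α)} {e : Finset α} {c : α}
    (hp : H.IsNBPath u p) (he : e ∈ H.edges) (hb : lastVert u p ∈ e) (hc : c ∈ e) :
    ∃ q, H.IsNBPath u q ∧ lastVert u q = c := by
  by_cases hmem : c ∈ u :: p.map Prod.snd
  · obtain ⟨i, hi, hvi⟩ := mem_vlist_iff.mp hmem
    exact ⟨p.take i, hp.take i, by rw [lastVert_take hi]; exact hvi⟩
  · have hex : ∃ i, i ≤ p.length ∧ vertAt u p i ∈ e :=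
      ⟨p.length, le_rfl, by rw [← lastVert_eq_vertAt]; exact hb⟩
    obtain ⟨hile, hie⟩ := Nat.find_spec hex
    set i := Nat.find hex with hidef
    have hmin : ∀ j, j < i → j ≤ p.length → vertAt u p j ∉ e := by
      intro j hj hj' hje
      exact Nat.find_min hex hj ⟨hj', hje⟩
    refine ⟨p.take i ++ [(e, c)], isNBPath_concat (hp.take i) he ?_ hc ?_ ?_ ?_,
      lastVert_concat _ _ _⟩
    · rw [lastVert_take hile]; exact hie
    · intro hmem'
      obtain ⟨t, ht, hte⟩ := List.mem_iff_getElem.mp hmem'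
      simp only [List.length_map, List.length_take, lt_min_iff] at ht
      have : (p.getD t (∅, u)).1 = e := by
        rw [getD_eq_getElem' _ ht.2, ← hte, List.getElem_map]
        exact congrArg Prod.fst (List.getElem_take).symm
      obtain ⟨_, h2, _, _⟩ := hp.2.2.2 t ht.2
      rw [this] at h2
      exact hmin t ht.1 (le_of_lt ht.2) h2
    · intro h
      obtain ⟨j, hj, hvj⟩ := mem_vlist_iff.mp h
      simp only [List.length_take] at hj
      rw [vertAt_take (le_trans hj (min_le_left _ _)) (le_trans hj (min_le_right _ _))] at hvj
      exact hmem (hvj ▸ vertAt_mem_vlist (le_trans hj (min_le_right _ _)))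
    · intro j hj
      simp only [List.length_take, lt_min_iff] at hj
      rw [vertAt_take (le_of_lt hj.1) (le_of_lt hj.2)]
      exact hmin j hj.1 (le_of_lt hj.2)

lemma exists_nbpath_to (hu : u ∈ H.verts) {v : α}
    (hrt : Relation.ReflTransGen H.Adj u v) :
    ∃ p, H.IsNBPath u p ∧ lastVert u p = v := by
  induction hrt with
  | refl => exact ⟨[], isNBPath_nil hu, rfl⟩
  | tail hab hbc ih =>
    obtain ⟨p, hp, hlast⟩ := ih
    obtain ⟨e, he, hbe, hce⟩ := hbc
    exact exists_nbpath_step hp he (hlast ▸ hbe) hce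

end KHypergraph
namespace KHypergraph

variable {α : Type*} [DecidableEq α] {H : KHypergraph α} {u : α}

lemma pathTree_edge_structure [Fintype α] {E : Finset (List (Finset α × α))}
    (hE : E ∈ (H.pathTree u).edges) :
    ∃ p₁ e, H.IsNBPath u p₁ ∧ e ∈ H.edges ∧ (e.erase (lastVert u p₁)).Nonempty ∧
      (∀ v ∈ e.erase (lastVert u p₁), H.IsNBPath u (p₁ ++ [(e, v)])) ∧
      E = insert p₁ ((e.erase (lastVert u p₁)).image (fun v => p₁ ++ [(e, v)])) := by
  simp only [pathTree, Finset.mem_image, Finset.mem_filter, Finset.mem_product] at hE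
  obtain ⟨q, ⟨⟨hq1, hq2⟩, hne, hall⟩, rfl⟩ := hE
  exact ⟨q.1, q.2, mem_pathTreeVerts.mp hq1, hq2, hne, hall, rfl⟩

/-- The canonical "downward" edge determined by a nonempty path `w`. -/
noncomputable def downEdge (u : α) (w : List (Finset α × α)) : Finset (List (Finset α × α)) :=
  insert w.dropLast (((w.getLastD (∅, u)).1.erase (lastVert u w.dropLast)).image
    (fun v => w.dropLast ++ [((w.getLastD (∅, u)).1, v)]))

lemma edge_eq_downEdge [Fintype α] {E : Finset (List (Finset α × α))}
    (hE : E ∈ (H.pathTree u).edges) {w w' : List (Finset α × α)}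
    (hw : w ∈ E) (hw' : w' ∈ E) (hne : w' ≠ w) (hlen : w'.length ≤ w.length) :
    E = downEdge u w := by
  obtain ⟨p₁, e, _, _, _, _, rfl⟩ := pathTree_edge_structure hE
  simp only [Finset.mem_insert, Finset.mem_image] at hw hw'
  rcases hw with rfl | ⟨v, hv, rfl⟩
  · rcases hw' with rfl | ⟨v', _, rfl⟩
    · exact absurd rfl hne
    · exfalso
      simp only [List.length_append, List.length_cons, List.length_nil] at hlen
      omega
  · unfold downEdge
    rw [List.dropLast_concat, List.getLastD_concat]

lemma pathTree_hasCycle_false [Fintype α] : ¬ (H.pathTree u).HasCycle := by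
  rintro ⟨z, c, hz, hne, hfn, hsn, hlast, hcond⟩
  have hpos : 0 < c.length := List.length_pos_iff.mpr hne
  have hlen2 : 2 ≤ c.length := by
    rcases Nat.lt_or_ge c.length 2 with h | h
    · exfalso
      have h1 : c.length = 1 := by omega
      obtain ⟨x, rfl⟩ := List.length_eq_one_iff.mp h1
      have := (hcond 0 (by simp)).2.2.2
      apply this
      have : lastVert z [x] = x.2 := by
        have : ([] : List (Finset (List (Finset α × α)) × List (Finset α × α))) ++ [x] = [x] := rfl
        rw [← this, lastVert_concat]
      rw [hlast] at this
      rw [vertAt_zero, this]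
      rfl
    · exact h
  -- choose index of maximum-length vertex
  obtain ⟨ts, hts, hmax⟩ := Finset.exists_max_image (Finset.range c.length)
    (fun t => (vertAt z c t).length) ⟨0, by simp; omega⟩
  rw [Finset.mem_range] at hts
  have hmax' : ∀ t ≤ c.length, (vertAt z c t).length ≤ (vertAt z c ts).length := by
    intro t ht
    rcases Nat.lt_or_ge t c.length with h | h
    · exact hmax t (Finset.mem_range.mpr h)
    · have : t = c.length := by omega
      subst this
      rw [← lastVert_eq_vertAt, hlast]
      exact hmax 0 (Finset.mem_range.mpr (by omega))
  set w := vertAt z c ts with hw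
  -- incoming edge index
  set s₁ := if ts = 0 then c.length - 1 else ts - 1 with hs₁
  have hs₁lt : s₁ < c.length := by rw [hs₁]; split <;> omega
  obtain ⟨hE₁edge, hE₁v, hE₁snd, hE₁ne⟩ := hcond s₁ hs₁lt
  have hsndE₁ : (c.getD s₁ (∅, z)).2 = w := by
    rw [← vertAt_succ hs₁lt, hw, hs₁]
    split
    · rename_i h0
      rw [show c.length - 1 + 1 = c.length by omega, ← lastVert_eq_vertAt, hlast, h0]
      rfl
    · congr 1; omega
  obtain ⟨hE₂edge, hE₂v, hE₂snd, hE₂ne⟩ := hcond ts hts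
  have hsndE₂ : (c.getD ts (∅, z)).2 = vertAt z c (ts + 1) := (vertAt_succ hts).symm
  -- the two edges are distinct
  have hEne : (c.getD s₁ (∅, z)).1 ≠ (c.getD ts (∅, z)).1 := by
    intro h
    have := fst_injOn hfn hs₁lt hts (∅, z) h
    rw [hs₁] at this
    split at this <;> omega
  apply hEne
  have h₁ : (c.getD s₁ (∅, z)).1 = downEdge u w := by
    apply edge_eq_downEdge hE₁edge (hsndE₁ ▸ hE₁snd) hE₁v
    · intro h
      exact hE₁ne (h.trans hsndE₁.symm)
    · exact hmax' s₁ (le_of_lt hs₁lt)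
  have h₂ : (c.getD ts (∅, z)).1 = downEdge u w := by
    apply edge_eq_downEdge hE₂edge hE₂v (hsndE₂ ▸ hE₂snd)
    · intro h
      exact hE₂ne (by rw [hsndE₂]; exact h.symm)
    · exact hmax' (ts + 1) (by omega)
  rw [h₁, h₂]

end KHypergraph
namespace KHypergraph

section

variable {β : Type*} [DecidableEq β] {γ : Type*} [DecidableEq γ]

lemma vertAt_map (g : γ → β) (F : Finset γ × γ → Finset β × β)
    (hF : ∀ x, (F x).2 = g x.2) (u : γ) (p : List (Finset γ × γ)) {t : ℕ}
    (ht : t ≤ p.length) : vertAt (g u) (p.map F) t = g (vertAt u p t) := by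
  have hmm : (p.map F).map Prod.snd = (p.map Prod.snd).map g := by
    rw [List.map_map, List.map_map]
    exact List.map_congr_left (fun x _ => hF x)
  unfold vertAt
  rw [hmm, show g u :: (p.map Prod.snd).map g = (u :: p.map Prod.snd).map g from rfl]
  rw [List.getD_eq_getElem _ _ (by simp; omega), List.getD_eq_getElem _ _ (by simp; omega),
    List.getElem_map]

lemma lastVert_map (g : γ → β) (F : Finset γ × γ → Finset β × β)
    (hF : ∀ x, (F x).2 = g x.2) (u : γ) (p : List (Finset γ × γ)) :
    lastVert (g u) (p.map F) = g (lastVert u p) := by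
  induction p using List.reverseRecOn with
  | nil => rfl
  | append_singleton q x _ =>
    rw [List.map_append, List.map_cons, List.map_nil, lastVert_concat, lastVert_concat, hF]

lemma getD_map (g : γ → β) (F : Finset γ × γ → Finset β × β)
    (p : List (Finset γ × γ)) {t : ℕ} (ht : t < p.length) (d : Finset β × β)
    (d' : Finset γ × γ) : (p.map F).getD t d = F (p.getD t d') := by
  rw [List.getD_eq_getElem _ _ (by simp; omega), List.getD_eq_getElem _ _ ht, List.getElem_map]

lemma hasCycle_of_isom {H₁ : KHypergraph β} {H₂ : KHypergraph γ}
    (hiso : H₁.Isom H₂) (hcyc : H₂.HasCycle) : H₁.HasCycle := by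
  obtain ⟨f, hbij, hfwd, hsur⟩ := hiso
  obtain ⟨z, p, hz, hne, hfn, hsn, hlast, hcond⟩ := hcyc
  obtain ⟨x₀, -, -⟩ := hbij.surjOn hz
  haveI : Nonempty β := ⟨x₀⟩
  set g := Function.invFunOn f ↑H₁.verts with hg
  have hinv : Set.InvOn g f ↑H₁.verts ↑H₂.verts := hbij.invOn_invFunOn
  have hg1 : ∀ x ∈ H₁.verts, g (f x) = x := fun x hx => hinv.1 hx
  have hg2 : ∀ y ∈ H₂.verts, f (g y) = y := fun y hy => hinv.2 hy
  have hgmaps : ∀ y ∈ H₂.verts, g y ∈ H₁.verts := fun y hy =>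
    hbij.surjOn.mapsTo_invFunOn hy
  have hginj : ∀ y ∈ H₂.verts, ∀ y' ∈ H₂.verts, g y = g y' → y = y' := by
    intro y hy y' hy' h
    rw [← hg2 y hy, ← hg2 y' hy', h]
  have hedge : ∀ e ∈ H₂.edges, e.image g ∈ H₁.edges ∧ (e.image g).image f = e := by
    intro e he
    obtain ⟨e₁, he₁, rfl⟩ := hsur e he
    have hsub : ∀ x ∈ e₁, x ∈ H₁.verts := fun x hx => H₁.edge_sub e₁ he₁ hx
    have : (e₁.image f).image g = e₁ := by
      rw [Finset.image_image]
      rw [show Finset.image (g ∘ f) e₁ = Finset.image id e₁ from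
        Finset.image_congr (fun x hx => hg1 x (hsub x hx))]
      exact Finset.image_id
    rw [this]
    exact ⟨he₁, rfl⟩
  have hvmem : ∀ t ≤ p.length, vertAt z p t ∈ H₂.verts := by
    intro t ht
    rcases t with _ | s
    · exact hz
    · have hs : s < p.length := by omega
      obtain ⟨h1, _, h3, _⟩ := hcond s hs
      rw [vertAt_succ hs]
      exact H₂.edge_sub _ h1 h3
  have hfmem : ∀ x ∈ p.map Prod.fst, x ∈ H₂.edges := by
    intro x hx
    obtain ⟨t, ht, rfl⟩ := List.mem_iff_getElem.mp hx
    simp only [List.length_map] at ht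
    have := (hcond t ht).1
    rw [getD_eq_getElem' _ ht] at this
    simpa using this
  have hsmem : ∀ x ∈ p.map Prod.snd, x ∈ H₂.verts := by
    intro x hx
    obtain ⟨t, ht, rfl⟩ := List.mem_iff_getElem.mp hx
    simp only [List.length_map] at ht
    obtain ⟨h1, _, h3, _⟩ := hcond t ht
    rw [getD_eq_getElem' _ ht] at h1 h3
    simp only [List.getElem_map]
    exact H₂.edge_sub _ h1 h3
  set F : Finset γ × γ → Finset β × β := fun s => (s.1.image g, g s.2) with hF
  refine ⟨g z, p.map F, hgmaps z hz, by simpa using hne, ?_, ?_, ?_, ?_⟩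
  · have : (p.map F).map Prod.fst = (p.map Prod.fst).map (Finset.image g) := by
      rw [List.map_map, List.map_map]; rfl
    rw [this]
    refine List.Nodup.map_on ?_ hfn
    intro x hx y hy hxy
    rw [← (hedge x (hfmem x hx)).2, ← (hedge y (hfmem y hy)).2, hxy]
  · have : (p.map F).map Prod.snd = (p.map Prod.snd).map g := by
      rw [List.map_map, List.map_map]; rfl
    rw [this]
    refine List.Nodup.map_on ?_ hsn
    intro x hx y hy hxy
    exact hginj x (hsmem x hx) y (hsmem y hy) hxy
  · rw [lastVert_map g F (fun x => rfl), hlast]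
  · intro t ht
    simp only [List.length_map] at ht
    rw [getD_map g F p ht _ (∅, z), vertAt_map g F (fun x => rfl) z p (le_of_lt ht)]
    obtain ⟨h1, h2, h3, h4⟩ := hcond t ht
    refine ⟨(hedge _ h1).1, Finset.mem_image_of_mem g h2, Finset.mem_image_of_mem g h3, ?_⟩
    intro h
    have hv1 : vertAt z p t ∈ H₂.verts := hvmem t (le_of_lt ht)
    have hv2 : (p.getD t (∅, z)).2 ∈ H₂.verts := H₂.edge_sub _ h1 h3
    exact h4 (hginj _ hv1 _ hv2 h)

end

end KHypergraph
namespace KHypergraph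

variable {α : Type*} [DecidableEq α] {H : KHypergraph α} {u : α}

lemma hasCycle_of_two_nbpaths_aux (n : ℕ) :
    ∀ p q : List (Finset α × α), p.length + q.length ≤ n → H.IsNBPath u p →
      H.IsNBPath u q → p ≠ q → lastVert u p = lastVert u q → H.HasCycle := by
  induction n with
  | zero =>
    intro p q hl _ _ hne _
    exfalso
    apply hne
    have h1 : p = [] := List.eq_nil_of_length_eq_zero (by omega)
    have h2 : q = [] := List.eq_nil_of_length_eq_zero (by omega)
    rw [h1, h2]
  | succ n ih =>
    intro p q hlen hp hq hpq hlast
    set d : Finset α × α := (∅, u) with hd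
    -- divergence index
    have hex : ∃ i, p.take i ≠ q.take i := by
      refine ⟨p.length + q.length, ?_⟩
      rw [List.take_of_length_le (by omega), List.take_of_length_le (by omega)]
      exact hpq
    have hfind1 : 1 ≤ Nat.find hex := by
      rw [Nat.one_le_iff_ne_zero]
      intro h0
      have := Nat.find_spec hex
      rw [h0] at this
      simp at this
    set j : ℕ := Nat.find hex - 1 with hjdef
    have hje : p.take j = q.take j := by
      by_contra h
      exact absurd (Nat.find_min hex (by omega) h) (by simp)
    have hjne : p.take (j + 1) ≠ q.take (j + 1) := by
      have := Nat.find_spec hex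
      rwa [show Nat.find hex = j + 1 by omega] at this
    -- j is below both lengths
    have hnotpre : ∀ p' q' : List (Finset α × α), H.IsNBPath u p' → H.IsNBPath u q' →
        lastVert u p' = lastVert u q' → p'.take j = q'.take j →
        p'.take (j+1) ≠ q'.take (j+1) → ¬ p'.length ≤ j → True := fun _ _ _ _ _ _ _ _ => trivial
    have hjp : j < p.length := by
      by_contra hjlp
      push_neg at hjlp
      have hp1 : p.take j = p := List.take_of_length_le hjlp
      have hp2 : p.take (j+1) = p := List.take_of_length_le (by omega)
      have hjq : j < q.length := by
        by_contra hjlq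
        push_neg at hjlq
        rw [hp2, List.take_of_length_le (by omega)] at hjne
        exact hjne (by rw [← hp1, hje, List.take_of_length_le hjlq])
      have hplen : p.length = j := by
        have := congrArg List.length hje
        rw [hp1] at this
        simp only [List.length_take] at this
        omega
      have h1 : lastVert u p = vertAt u q j := by
        rw [← lastVert_take (le_of_lt hjq), ← hje, hp1]
      rw [hlast, lastVert_eq_vertAt] at h1
      have := vertAt_injOn hq.2.2.1 le_rfl (le_of_lt hjq) h1
      omega
    have hjq : j < q.length := by
      by_contra hjlq
      push_neg at hjlq
      have hq1 : q.take j = q := List.take_of_length_le hjlq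
      have h1 : lastVert u q = vertAt u p j := by
        rw [← hq1, ← hje, lastVert_take (le_of_lt hjp)]
      rw [← hlast, lastVert_eq_vertAt] at h1
      have := vertAt_injOn hp.2.2.1 le_rfl (le_of_lt hjp) h1
      omega
    -- divergent steps
    have htkp : p.take (j+1) = p.take j ++ [p.getD j d] := by
      rw [List.take_succ, List.getElem?_eq_getElem hjp, getD_eq_getElem' d hjp]
      rfl
    have htkq : q.take (j+1) = q.take j ++ [q.getD j d] := by
      rw [List.take_succ, List.getElem?_eq_getElem hjq, getD_eq_getElem' d hjq]
      rfl
    have hstep : p.getD j d ≠ q.getD j d := by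
      intro h
      apply hjne
      rw [htkp, htkq, hje, h]
    -- common prefix vertices agree
    have hva : ∀ i ≤ j, vertAt u p i = vertAt u q i := by
      intro i hi
      rw [← vertAt_take hi (by omega), hje, vertAt_take hi (by omega)]
    -- common prefix steps agree
    have hsteps : ∀ t, t < j → p.getD t d = q.getD t d := by
      intro t ht
      rw [← getD_take d ht (by omega), hje, getD_take d ht (by omega)]
    -- no early reconvergence, else recurse
    by_cases hmeet : ∃ s t, j < s ∧ s ≤ p.length ∧ j < t ∧ t ≤ q.length ∧
        (s ≠ p.length ∨ t ≠ q.length) ∧ vertAt u p s = vertAt u q t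
    · obtain ⟨s, t, hs1, hs2, ht1, ht2, hne', hvst⟩ := hmeet
      apply ih (p.take s) (q.take t)
      · simp only [List.length_take]
        rcases hne' with h | h <;> omega
      · exact hp.take s
      · exact hq.take t
      · intro h
        have hlen' : s = t := by
          have := congrArg List.length h
          simp only [List.length_take] at this
          omega
        apply hjne
        have h1 : (p.take s).take (j+1) = (q.take t).take (j+1) := by rw [h]
        rw [List.take_take, List.take_take, min_eq_left (by omega), min_eq_left (by omega)] at h1
        exact h1
      · rw [lastVert_take hs2, lastVert_take ht2]
        exact hvst
    · push_neg at hmeet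
      have hF3 : ∀ s t, j < s → s ≤ p.length → j < t → t ≤ q.length →
          (s ≠ p.length ∨ t ≠ q.length) → vertAt u p s ≠ vertAt u q t := by
        intro s t h1 h2 h3 h4 h5
        exact hmeet s t h1 h2 h3 h4 h5
      -- no shared later edges (except possibly both at j), else recurse
      by_cases hshare : ∃ a b, j ≤ a ∧ a < p.length ∧ j ≤ b ∧ b < q.length ∧
          (j < a ∨ j < b) ∧ (p.getD a d).1 = (q.getD b d).1
      · obtain ⟨a, b, ha1, ha2, hb1, hb2, hab, hY⟩ := hshare
        obtain ⟨hpe, hpv, hps, hpm⟩ := hp.2.2.2 a ha2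
        obtain ⟨hqe, hqv, hqs, hqm⟩ := hq.2.2.2 b hb2
        rcases Nat.lt_or_ge j a with hja | hja'
        · -- case j < a : pair (p.take a, q.take b ++ [(Y, vertAt u p a)])
          apply ih (p.take a) (q.take b ++ [((p.getD a d).1, vertAt u p a)])
          · simp only [List.length_append, List.length_take, List.length_cons, List.length_nil]
            omega
          · exact hp.take a
          · apply isNBPath_concat (hq.take b) hpe
            · rw [lastVert_take (le_of_lt hb2), hY]
              exact hqv
            · exact hpv
            · intro hmem
              obtain ⟨t, ht, hte⟩ := List.mem_iff_getElem.mp hmem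
              simp only [List.length_map, List.length_take] at ht
              have ht' : t < b := by omega
              have : (q.getD t d).1 = (p.getD a d).1 := by
                rw [getD_eq_getElem' d (by omega), ← hte, List.getElem_map]
                congr 1
                exact (List.getElem_take).symm
              rw [hY] at this
              have := fst_injOn hq.2.1 (by omega) hb2 d this
              omega
            · intro hmem
              obtain ⟨i, hi, hvi⟩ := mem_vlist_iff.mp hmem
              simp only [List.length_take] at hi
              have hib : i ≤ b := le_trans hi (min_le_left _ _)
              have hiq : i ≤ q.length := le_trans hi (min_le_right _ _)
              rw [vertAt_take hib hiq] at hvi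
              rcases Nat.lt_or_ge j i with hji | hji'
              · exact hF3 a i hja (le_of_lt ha2) hji hiq (Or.inl (by omega)) hvi.symm
              · rw [← hva i hji'] at hvi
                have := vertAt_injOn hp.2.2.1 (le_of_lt ha2) (by omega) hvi.symm
                omega
            · intro i hi
              simp only [List.length_take] at hi
              have hib : i < b := by omega
              rw [vertAt_take (by omega) (by omega)]
              intro hmem
              rw [hY] at hmem
              exact hqm i hib hmem
          · intro h
            have hlen' : a = b + 1 := by
              have := congrArg List.length h
              simp only [List.length_append, List.length_take, List.length_cons,
                List.length_nil] at this
              omega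
            have h1 : (p.take a).getD b d = ((p.getD a d).1, vertAt u p a) := by
              rw [h]
              have h2 := getD_concat_len (p := q.take b) ((p.getD a d).1, vertAt u p a) d
              rwa [show (q.take b).length = b by simp; omega] at h2
            rw [getD_take d (by omega) (by omega)] at h1
            have : (p.getD b d).1 = (p.getD a d).1 := by rw [h1]
            have := fst_injOn hp.2.1 (by omega) ha2 d this
            omega
          · rw [lastVert_take (le_of_lt ha2), lastVert_concat]
        · -- case a = j, hence j < b : pair (q.take b, p.take j ++ [(Y, vertAt u q b)])
          have haj : a = j := by omega
          have hjb : j < b := by rcases hab with h | h <;> omega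
          apply ih (q.take b) (p.take a ++ [((p.getD a d).1, vertAt u q b)])
          · simp only [List.length_append, List.length_take, List.length_cons, List.length_nil]
            omega
          · exact hq.take b
          · apply isNBPath_concat (hp.take a) hpe
            · rw [lastVert_take (le_of_lt ha2)]
              exact hpv
            · rw [hY]
              exact hqv
            · intro hmem
              obtain ⟨t, ht, hte⟩ := List.mem_iff_getElem.mp hmem
              simp only [List.length_map, List.length_take] at ht
              have ht' : t < a := by omega
              have : (p.getD t d).1 = (p.getD a d).1 := by
                rw [getD_eq_getElem' d (by omega), ← hte, List.getElem_map]
                congr 1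
                exact (List.getElem_take).symm
              have := fst_injOn hp.2.1 (by omega) ha2 d this
              omega
            · intro hmem
              obtain ⟨i, hi, hvi⟩ := mem_vlist_iff.mp hmem
              simp only [List.length_take] at hi
              have hia : i ≤ a := le_trans hi (min_le_left _ _)
              have hip : i ≤ p.length := le_trans hi (min_le_right _ _)
              rw [vertAt_take hia hip, hva i (by omega)] at hvi
              have := vertAt_injOn hq.2.2.1 (by omega) (le_of_lt hb2) hvi
              omega
            · intro i hi
              simp only [List.length_take] at hi
              rw [vertAt_take (by omega) (by omega)]
              intro hmem
              exact hpm i (by omega) hmem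
          · intro h
            have hlen' : b = a + 1 := by
              have := congrArg List.length h
              simp only [List.length_append, List.length_take, List.length_cons,
                List.length_nil] at this
              omega
            have h1 : (q.take b).getD a d = ((p.getD a d).1, vertAt u q b) := by
              rw [h]
              have h2 := getD_concat_len (p := p.take a) ((p.getD a d).1, vertAt u q b) d
              rwa [show (p.take a).length = a by simp; omega] at h2
            rw [getD_take d (by omega) (by omega)] at h1
            have : (q.getD a d).1 = (q.getD b d).1 := by rw [h1, hY]
            have := fst_injOn hq.2.1 (by omega) hb2 d this
            omega
          · rw [lastVert_take (le_of_lt hb2), lastVert_concat]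
      · push_neg at hshare
        have hF4 : ∀ a b, j ≤ a → a < p.length → j ≤ b → b < q.length →
            (j < a ∨ j < b) → (p.getD a d).1 ≠ (q.getD b d).1 := by
          intro a b h1 h2 h3 h4 h5
          exact hshare a b h1 h2 h3 h4 h5
        -- junction data
        obtain ⟨m, hm1, hm2, hjunc1, hjunc2, hEdisj, hVdisj⟩ :
            ∃ m, j ≤ m ∧ m ≤ p.length ∧
              vertAt u p m ∈ (q.getD j d).1 ∧
              vertAt u p m ≠ vertAt u q (j + 1) ∧
              (∀ a b, m ≤ a → a < p.length → j ≤ b → b < q.length →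
                (p.getD a d).1 ≠ (q.getD b d).1) ∧
              (∀ s t, m ≤ s → s < p.length → j + 1 ≤ t → t ≤ q.length →
                vertAt u p s ≠ vertAt u q t) := by
          by_cases hsame : (p.getD j d).1 = (q.getD j d).1
          · refine ⟨j + 1, by omega, by omega, ?_, ?_, ?_, ?_⟩
            · rw [vertAt_succ hjp, ← hsame]
              exact (hp.2.2.2 j hjp).2.2.1
            · rw [vertAt_succ hjp, vertAt_succ hjq]
              intro h
              exact hstep (Prod.ext hsame h)
            · intro a b ha1 ha2 hb1 hb2
              exact hF4 a b (by omega) ha2 hb1 hb2 (Or.inl (by omega))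
            · intro s t hs1 hs2 ht1 ht2
              exact hF3 s t (by omega) (by omega) (by omega) ht2 (Or.inl (by omega))
          · refine ⟨j, le_rfl, by omega, ?_, ?_, ?_, ?_⟩
            · rw [hva j le_rfl]
              exact (hq.2.2.2 j hjq).2.1
            · rw [hva j le_rfl]
              intro h
              have := vertAt_injOn hq.2.2.1 (by omega) (by omega) h
              omega
            · intro a b ha1 ha2 hb1 hb2
              by_cases hab : a = j ∧ b = j
              · rw [hab.1, hab.2]
                exact hsame
              · have hab' : a ≠ j ∨ b ≠ j := by tauto
                apply hF4 a b ha1 ha2 hb1 hb2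
                omega
            · intro s t hs1 hs2 ht1 ht2
              rcases Nat.eq_or_lt_of_le hs1 with h | h
              · rw [← h, hva j le_rfl]
                intro heq
                have := vertAt_injOn hq.2.2.1 (by omega) ht2 heq
                omega
              · exact hF3 s t h (by omega) (by omega) ht2 (Or.inl (by omega))
        -- the cycle
        set z := lastVert u p with hzdef
        set A := p.length - m with hA
        set B := q.length - j with hB
        set c : List (Finset α × α) :=
          (List.range A).map (fun i => ((p.getD (p.length - 1 - i) d).1,
            vertAt u p (p.length - 1 - i)))
          ++ (List.range B).map (fun i => ((q.getD (j + i) d).1, vertAt u q (j + 1 + i)))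
          with hc
        have hclen : c.length = A + B := by
          rw [hc]; simp
        have hcg1 : ∀ i, i < A → ∀ d'' : Finset α × α,
            c.getD i d'' = ((p.getD (p.length - 1 - i) d).1, vertAt u p (p.length - 1 - i)) := by
          intro i hi d''
          rw [hc, getD_eq_getElem' d'' (by simp; omega),
            List.getElem_append_left (by simp; omega), List.getElem_map, List.getElem_range]
        have hcg2 : ∀ i, i < B → ∀ d'' : Finset α × α,
            c.getD (A + i) d'' = ((q.getD (j + i) d).1, vertAt u q (j + 1 + i)) := by
          intro i hi d''
          rw [hc, getD_eq_getElem' d'' (by simp; omega),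
            List.getElem_append_right (by simp)]
          simp only [List.length_map, List.length_range, Nat.add_sub_cancel_left]
          rw [List.getElem_map, List.getElem_range]
        have hvc1 : ∀ t, t ≤ A → vertAt z c t = vertAt u p (p.length - t) := by
          intro t ht
          cases t with
          | zero =>
            rw [vertAt_zero, Nat.sub_zero, hzdef, lastVert_eq_vertAt]
          | succ i =>
            rw [vertAt_succ (by rw [hclen]; omega), hcg1 i (by omega)]
            show vertAt u p (p.length - 1 - i) = _
            congr 1
            omega
        have hvc2 : ∀ i, 1 ≤ i → i ≤ B → vertAt z c (A + i) = vertAt u q (j + i) := by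
          intro i h1 h2
          obtain ⟨i', rfl⟩ : ∃ i', i = i' + 1 := ⟨i - 1, by omega⟩
          rw [show A + (i' + 1) = (A + i') + 1 by omega, vertAt_succ (by rw [hclen]; omega),
            hcg2 i' (by omega)]
          show vertAt u q (j + 1 + i') = _
          congr 1
          omega
        have hzmem : z ∈ H.verts := by
          rw [hzdef]
          exact hp.lastVert_mem_verts
        refine ⟨z, c, hzmem, ?_, ?_, ?_, ?_, ?_⟩
        · intro h
          rw [h] at hclen
          simp at hclen
          omega
        · have hmapfst : c.map Prod.fst =
              (List.range A).map (fun i => (p.getD (p.length - 1 - i) d).1)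
              ++ (List.range B).map (fun i => (q.getD (j + i) d).1) := by
            rw [hc, List.map_append, List.map_map, List.map_map]
            rfl
          rw [hmapfst, List.nodup_append]
          refine ⟨?_, ?_, ?_⟩
          · refine List.Nodup.map_on ?_ List.nodup_range
            intro x hx y hy hxy
            rw [List.mem_range] at hx hy
            have := fst_injOn hp.2.1 (show p.length - 1 - x < p.length by omega)
              (show p.length - 1 - y < p.length by omega) d hxy
            omega
          · refine List.Nodup.map_on ?_ List.nodup_range
            intro x hx y hy hxy
            rw [List.mem_range] at hx hy
            have := fst_injOn hq.2.1 (show j + x < q.length by omega)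
              (show j + y < q.length by omega) d hxy
            omega
          · intro x hx1 y hx2 hxy
            obtain ⟨i, hi, rfl⟩ := List.mem_map.mp hx1
            obtain ⟨i', hi', heq⟩ := List.mem_map.mp hx2
            rw [List.mem_range] at hi hi'
            exact hEdisj (p.length - 1 - i) (j + i') (by omega) (by omega) (by omega)
              (by omega) (hxy.trans heq.symm)
        · have hmapsnd : c.map Prod.snd =
              (List.range A).map (fun i => vertAt u p (p.length - 1 - i))
              ++ (List.range B).map (fun i => vertAt u q (j + 1 + i)) := by
            rw [hc, List.map_append, List.map_map, List.map_map]
            rfl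
          rw [hmapsnd, List.nodup_append]
          refine ⟨?_, ?_, ?_⟩
          · refine List.Nodup.map_on ?_ List.nodup_range
            intro x hx y hy hxy
            rw [List.mem_range] at hx hy
            have := vertAt_injOn hp.2.2.1 (show p.length - 1 - x ≤ p.length by omega)
              (show p.length - 1 - y ≤ p.length by omega) hxy
            omega
          · refine List.Nodup.map_on ?_ List.nodup_range
            intro x hx y hy hxy
            rw [List.mem_range] at hx hy
            have := vertAt_injOn hq.2.2.1 (show j + 1 + x ≤ q.length by omega)
              (show j + 1 + y ≤ q.length by omega) hxy
            omega
          · intro x hx1 y hx2 hxy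
            obtain ⟨i, hi, rfl⟩ := List.mem_map.mp hx1
            obtain ⟨i', hi', heq⟩ := List.mem_map.mp hx2
            rw [List.mem_range] at hi hi'
            exact hVdisj (p.length - 1 - i) (j + 1 + i') (by omega) (by omega) (by omega)
              (by omega) (hxy.trans heq.symm)
        · have hB1 : 1 ≤ B := by omega
          have hrw : c = ((List.range A).map (fun i => ((p.getD (p.length - 1 - i) d).1,
              vertAt u p (p.length - 1 - i)))
              ++ (List.range (B - 1)).map (fun i => ((q.getD (j + i) d).1,
                vertAt u q (j + 1 + i))))
              ++ [((q.getD (j + (B - 1)) d).1, vertAt u q (j + 1 + (B - 1)))] := by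
            rw [hc, show B = (B - 1) + 1 by omega, List.range_succ, List.map_append,
              List.append_assoc]
            rfl
          rw [hrw, lastVert_concat]
          show vertAt u q (j + 1 + (B - 1)) = z
          rw [show j + 1 + (B - 1) = q.length by omega, ← lastVert_eq_vertAt, ← hlast, hzdef]
        · intro t ht
          rw [hclen] at ht
          rcases Nat.lt_or_ge t A with hlt | hge
          · rw [hcg1 t hlt]
            obtain ⟨h1, h2, h3, h4⟩ := hp.2.2.2 (p.length - 1 - t) (by omega)
            refine ⟨h1, ?_, ?_, ?_⟩
            · rw [hvc1 t (le_of_lt hlt), show p.length - t = (p.length - 1 - t) + 1 by omega,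
                vertAt_succ (by omega)]
              exact h3
            · exact h2
            · rw [hvc1 t (le_of_lt hlt)]
              intro heq
              have h5 : vertAt u p (p.length - t) = vertAt u p (p.length - 1 - t) := heq
              have := vertAt_injOn hp.2.2.1 (by omega) (by omega) h5
              omega
          · have hiB : t - A < B := by omega
            rw [show t = A + (t - A) by omega, hcg2 (t - A) hiB]
            obtain ⟨h1, h2, h3, h4⟩ := hq.2.2.2 (j + (t - A)) (by omega)
            refine ⟨h1, ?_, ?_, ?_⟩
            · rcases Nat.eq_zero_or_pos (t - A) with h0 | hposi
              · simp only [h0, Nat.add_zero]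
                rw [hvc1 A le_rfl, show p.length - A = m by omega]
                exact hjunc1
              · rw [hvc2 (t - A) hposi (by omega)]
                exact h2
            · rw [show j + 1 + (t - A) = (j + (t - A)) + 1 by omega, vertAt_succ (by omega)]
              exact h3
            · rcases Nat.eq_zero_or_pos (t - A) with h0 | hposi
              · simp only [h0, Nat.add_zero]
                rw [hvc1 A le_rfl, show p.length - A = m by omega]
                exact hjunc2
              · rw [hvc2 (t - A) hposi (by omega)]
                intro heq
                have h5 : vertAt u q (j + (t - A)) = vertAt u q (j + 1 + (t - A)) := heq
                rw [show j + 1 + (t - A) = (j + (t - A)) + 1 by omega] at h5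
                have := vertAt_injOn hq.2.2.1 (by omega) (by omega) h5
                omega


end KHypergraph

/-- A `k`-uniform hypertree is isomorphic to each of its path trees; conversely, a
connected `k`-graph isomorphic to one of its path trees is a hypertree. -/
theorem pathTree_isom_iff_hypertree {α : Type*} [DecidableEq α] [Fintype α]
    (H : KHypergraph α) (k : ℕ) (hk : 2 ≤ k) (hH : H.IsUniform k)
    (hconn : H.Connected) (u : α) (hu : u ∈ H.verts) :
    (¬ H.HasCycle → (H.pathTree u).Isom H) ∧
      ((H.pathTree u).Isom H → ¬ H.HasCycle) := by
  open KHypergraph in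
  have himg : ∀ (p₁ : List (Finset α × α)) (e : Finset α), lastVert u p₁ ∈ e →
      (insert p₁ ((e.erase (lastVert u p₁)).image (fun v => p₁ ++ [(e, v)]))).image
        (lastVert u) = e := by
    intro p₁ e hw
    rw [Finset.image_insert, Finset.image_image]
    have h2 : (e.erase (lastVert u p₁)).image ((lastVert u) ∘ (fun v => p₁ ++ [(e, v)]))
        = (e.erase (lastVert u p₁)).image id :=
      Finset.image_congr (fun v _ => lastVert_concat u p₁ (e, v))
    rw [h2, Finset.image_id, Finset.insert_erase hw]
  constructor
  · intro hnc
    refine ⟨lastVert u, ⟨?_, ?_, ?_⟩, ?_, ?_⟩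
    · -- maps to
      intro p hp
      rw [Finset.mem_coe] at hp
      have hp' : H.IsNBPath u p := mem_pathTreeVerts.mp hp
      exact hp'.lastVert_mem_verts
    · -- injective
      intro p hp q hq heq
      rw [Finset.mem_coe] at hp hq
      by_contra hne
      exact hnc (hasCycle_of_two_nbpaths_aux (p.length + q.length) p q le_rfl
        (mem_pathTreeVerts.mp hp) (mem_pathTreeVerts.mp hq) hne heq)
    · -- surjective
      intro v hv
      rw [Finset.mem_coe] at hv
      obtain ⟨p, hp, hl⟩ := exists_nbpath_to hu (hconn.2 u hu v hv)
      exact ⟨p, Finset.mem_coe.mpr (mem_pathTreeVerts.mpr hp), hl⟩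
    · -- edges map to edges
      intro E hE
      obtain ⟨p₁, e, hnb₁, he, hne, hall, rfl⟩ := pathTree_edge_structure hE
      have hw : lastVert u p₁ ∈ e := by
        obtain ⟨v, hv⟩ := hne
        have hnb := hall v hv
        have hcond := (hnb.2.2.2 p₁.length (by simp)).2.1
        rw [getD_concat_len, vertAt_append_of_le le_rfl, ← lastVert_eq_vertAt] at hcond
        exact hcond
      rw [himg p₁ e hw]
      exact he
    · -- edges are covered
      intro e he
      have hcard : e.card = k := hH e he
      obtain ⟨x, hx⟩ : e.Nonempty := Finset.card_pos.mp (by omega)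
      have hxv : x ∈ H.verts := H.edge_sub e he hx
      have hNne : ((pathTreeVerts H u).filter (fun p => lastVert u p ∈ e)).Nonempty := by
        obtain ⟨p, hp, hl⟩ := exists_nbpath_to hu (hconn.2 u hu x hxv)
        exact ⟨p, Finset.mem_filter.mpr ⟨mem_pathTreeVerts.mpr hp, by rw [hl]; exact hx⟩⟩
      obtain ⟨p₁, hp₁N, hmin⟩ := Finset.exists_min_image _ (fun p => p.length) hNne
      rw [Finset.mem_filter] at hp₁N
      have hp₁ : H.IsNBPath u p₁ := mem_pathTreeVerts.mp hp₁N.1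
      have hwe : lastVert u p₁ ∈ e := hp₁N.2
      have hmin' : ∀ p', H.IsNBPath u p' → lastVert u p' ∈ e → p₁.length ≤ p'.length := by
        intro p' h1 h2
        exact hmin p' (Finset.mem_filter.mpr ⟨mem_pathTreeVerts.mpr h1, h2⟩)
      have hc1 : ∀ i < p₁.length, vertAt u p₁ i ∉ e := by
        intro i hi hie
        have := hmin' (p₁.take i) (hp₁.take i)
          (by rw [lastVert_take (le_of_lt hi)]; exact hie)
        simp only [List.length_take] at this
        omega
      have hc2 : e ∉ p₁.map Prod.fst := by
        intro hmem
        obtain ⟨t, ht, hte⟩ := List.mem_iff_getElem.mp hmem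
        simp only [List.length_map] at ht
        have hgd : (p₁.getD t (∅, u)).1 = e := by
          rw [getD_eq_getElem' _ ht, ← hte, List.getElem_map]
        have := (hp₁.2.2.2 t ht).2.1
        rw [hgd] at this
        exact hc1 t ht this
      have hc3 : ∀ v ∈ e.erase (lastVert u p₁), v ∉ u :: p₁.map Prod.snd := by
        intro v hv hmem
        obtain ⟨i, hi, hvi⟩ := mem_vlist_iff.mp hmem
        rcases Nat.lt_or_ge i p₁.length with h | h
        · exact hc1 i h (hvi ▸ Finset.mem_of_mem_erase hv)
        · have : i = p₁.length := by omega
          subst this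
          rw [← lastVert_eq_vertAt] at hvi
          exact (Finset.mem_erase.mp hv).1 hvi.symm
      have hallNB : ∀ v ∈ e.erase (lastVert u p₁), H.IsNBPath u (p₁ ++ [(e, v)]) := by
        intro v hv
        exact isNBPath_concat hp₁ he hwe (Finset.mem_of_mem_erase hv) hc2 (hc3 v hv) hc1
      have hnee : (e.erase (lastVert u p₁)).Nonempty := by
        rw [← Finset.card_pos, Finset.card_erase_of_mem hwe, hcard]
        omega
      refine ⟨insert p₁ ((e.erase (lastVert u p₁)).image (fun v => p₁ ++ [(e, v)])), ?_,
        himg p₁ e hwe⟩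
      show _ ∈ (H.pathTree u).edges
      simp only [pathTree, Finset.mem_image, Finset.mem_filter, Finset.mem_product]
      exact ⟨(p₁, e), ⟨⟨hp₁N.1, he⟩, hnee, hallNB⟩, rfl⟩
  · intro hiso hcyc
    exact pathTree_hasCycle_false (hasCycle_of_isom hiso hcyc)
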